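/- Let G > 0, R > 0, γ > 0, N ≥ 2, and let g¹, …, g^{N+1} ∈ ℝ^d satisfy ‖g^i‖ ≤ G. Let h = R/N^γ, let h_k = h/√(G² + ∑_{i=1}^{k} ‖g^i‖²) for k = 1, …, N and h_{N+1} := h_N, and let δ ∈ [0, 1/2] be defined by G²·N^{2δ} = G² + ∑_{i=1}^{N−1} ‖g^i‖². Define v_{N+1} = 1 and v_k = h_{N+1} / (∑_{i=k+1}^{N+1} h_i·v_i) for k = N down to 0. Then (1/(2·h_{N+1}))·∑_{k=1}^{N−1} h_k²·v_k²·‖g^k‖² ≤ (R·G/4)·N^{−γ}·√(N^{2δ} + 1)·(4·log(N^{2δ}) + 5)/max{N^{2δ} − 1, 1}. -/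

import Mathlib

open Finset

private lemma log_step {x y : ℝ} (hx : 0 < x) (hxy : x ≤ y) :
    (y - x) / y ≤ Real.log y - Real.log x := by
  have hy : 0 < y := lt_of_lt_of_le hx hxy
  have h1 : Real.log (x / y) ≤ x / y - 1 := Real.log_le_sub_one_of_pos (by positivity)
  rw [Real.log_div (ne_of_gt hx) (ne_of_gt hy)] at h1
  have h2 : (y - x) / y = 1 - x / y := by field_simp
  linarith

private lemma harmonic_log (M : ℕ) :
    ∑ j ∈ Icc 1 M, 2 / (2 * (j : ℝ) + 1) ≤ Real.log (2 * M + 1) := by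
  induction M with
  | zero => simp
  | succ n ih =>
    rw [Finset.sum_Icc_succ_top (Nat.le_add_left 1 n)]
    have hx : (0:ℝ) < 2 * (n : ℝ) + 1 := by positivity
    have hxy : 2 * (n : ℝ) + 1 ≤ 2 * ((n : ℝ) + 1) + 1 := by linarith
    have hstep := log_step hx hxy
    have he : (2 * ((n : ℝ) + 1) + 1) - (2 * (n : ℝ) + 1) = 2 := by ring
    rw [he] at hstep
    push_cast
    push_cast at ih
    linarith

private lemma log_three_halves : Real.log (3 / 2 : ℝ) ≤ 1 / 2 := by
  rw [Real.log_le_iff_le_exp (by norm_num)]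
  have := Real.add_one_le_exp (1/2 : ℝ)
  linarith

set_option maxHeartbeats 1000000 in
private lemma core_sum_bound (G : ℝ) (hG : 0 < G) (N : ℕ) (hN : 2 ≤ N) (a : ℕ → ℝ)
    (ha0 : ∀ i, 0 ≤ a i) (haG : ∀ i, 1 ≤ i → i ≤ N → a i ≤ G ^ 2)
    (A : ℝ) (hA : G ^ 2 * A = G ^ 2 + ∑ i ∈ Icc 1 (N - 1), a i) :
    ∑ k ∈ Icc 1 (N - 1), a k / ((G ^ 2 + ∑ i ∈ Icc 1 k, a i) * (2 * ((N : ℝ) - k) + 1))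
      ≤ (4 * Real.log A + 5) / (2 * max (A - 1) 1) := by
  set B : ℕ → ℝ := fun k => G ^ 2 + ∑ i ∈ Icc 1 k, a i with hB
  have hBpos : ∀ k, 0 < B k := fun k =>
    add_pos_of_pos_of_nonneg (by positivity) (Finset.sum_nonneg fun i _ => ha0 i)
  have hB0 : B 0 = G ^ 2 := by simp [hB]
  have hBsucc : ∀ i, B (i + 1) = B i + a (i + 1) := by
    intro i
    simp only [hB]
    rw [Finset.sum_Icc_succ_top (Nat.le_add_left 1 i)]
    ring
  have hG2 : (0:ℝ) < G ^ 2 := by positivity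
  have hA1 : 1 ≤ A := by
    have hs : 0 ≤ ∑ i ∈ Icc 1 (N - 1), a i := Finset.sum_nonneg fun i _ => ha0 i
    nlinarith
  have hApos : (0:ℝ) < A := by linarith
  have hlogA : 0 ≤ Real.log A := Real.log_nonneg hA1
  have hBN1 : B (N - 1) = G ^ 2 * A := by rw [hA, hB]
  -- telescoping bound
  have telescope0 : ∀ M : ℕ, ∑ k ∈ Icc 1 M, a k / B k ≤ Real.log (B M) - Real.log (B 0) := by
    intro M
    induction M with
    | zero => simp
    | succ n ih =>
      rw [Finset.sum_Icc_succ_top (Nat.le_add_left 1 n)]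
      have hle : B n ≤ B (n + 1) := by rw [hBsucc]; linarith [ha0 (n + 1)]
      have hstep := log_step (hBpos n) hle
      have he : B (n + 1) - B n = a (n + 1) := by rw [hBsucc]; ring
      rw [he] at hstep
      linarith
  have telescope : ∑ k ∈ Icc 1 (N - 1), a k / B k ≤ Real.log A := by
    have h3 : Real.log (B (N - 1)) - Real.log (B 0) = Real.log A := by
      rw [hBN1, hB0, Real.log_mul (by positivity) (ne_of_gt hApos)]
      ring
    linarith [telescope0 (N - 1)]
  -- lower bound on B k
  have hBlow : ∀ k, 1 ≤ k → k ≤ N - 1 → G ^ 2 * A - (↑(N - 1 - k)) * G ^ 2 ≤ B k := by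
    intro k hk1 hk2
    have hsplit : (∑ i ∈ Ioc 0 k, a i) + ∑ i ∈ Ioc k (N - 1), a i = ∑ i ∈ Ioc 0 (N - 1), a i :=
      Finset.sum_Ioc_consecutive _ (Nat.zero_le k) hk2
    have hIcc : ∀ m : ℕ, Ioc 0 m = Icc 1 m := fun m => by rw [← Finset.Icc_add_one_left_eq_Ioc, zero_add]
    have htail : ∑ i ∈ Ioc k (N - 1), a i ≤ (↑(N - 1 - k)) * G ^ 2 := by
      calc ∑ i ∈ Ioc k (N - 1), a i ≤ (Ioc k (N - 1)).card • G ^ 2 := by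
            apply Finset.sum_le_card_nsmul
            intro i hi
            rw [Finset.mem_Ioc] at hi
            exact haG i (by omega) (by omega)
        _ = (↑(N - 1 - k)) * G ^ 2 := by rw [Nat.card_Ioc]; simp [nsmul_eq_mul]
    have hBsum : B (N - 1) = B k + ∑ i ∈ Ioc k (N - 1), a i := by
      simp only [hB]
      rw [← hIcc, ← hIcc, ← hsplit]
      ring
    rw [hBN1] at hBsum
    linarith
  have hgoaleq : ∑ k ∈ Icc 1 (N - 1), a k / ((G ^ 2 + ∑ i ∈ Icc 1 k, a i) * (2 * ((N : ℝ) - k) + 1))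
      = ∑ k ∈ Icc 1 (N - 1), a k / (B k * (2 * ((N : ℝ) - k) + 1)) := rfl
  rw [hgoaleq]
  clear hgoaleq hB
  clear_value B
  rcases le_or_gt A 2 with hA2 | hA2
  · -- easy case
    have hmax : max (A - 1) 1 = 1 := max_eq_right (by linarith)
    rw [hmax]
    have hle : ∑ k ∈ Icc 1 (N - 1), a k / (B k * (2 * ((N : ℝ) - k) + 1))
        ≤ ∑ k ∈ Icc 1 (N - 1), a k / B k := by
      apply Finset.sum_le_sum
      intro k hk
      rw [Finset.mem_Icc] at hk
      have hkN : (k : ℝ) ≤ N := by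
        have : k ≤ N := le_trans hk.2 (Nat.sub_le N 1)
        exact_mod_cast this
      have hw : (1:ℝ) ≤ 2 * ((N : ℝ) - k) + 1 := by linarith
      have hBk := hBpos k
      rw [div_le_div_iff₀ (by nlinarith) hBk]
      nlinarith [mul_nonneg (mul_nonneg (ha0 k) hBk.le) (by linarith : (0:ℝ) ≤ 2 * ((N:ℝ) - k) + 1 - 1)]
    have heq : (4 * Real.log A + 5) / (2 * 1) = 2 * Real.log A + 5 / 2 := by ring
    rw [heq]
    linarith [le_trans hle telescope]
  · -- hard case : A > 2
    have hmax : max (A - 1) 1 = A - 1 := max_eq_left (by linarith)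
    rw [hmax]
    set m : ℕ := ⌊A / 2⌋₊ with hm
    have hm1 : 1 ≤ m := Nat.le_floor (by norm_num; linarith)
    have hmle : (m : ℝ) ≤ A / 2 := Nat.floor_le (by linarith)
    have hmgt : A / 2 < (m : ℝ) + 1 := Nat.lt_floor_add_one _
    -- per-term bound
    have hterm : ∀ k ∈ Icc 1 (N - 1),
        a k / (B k * (2 * ((N : ℝ) - k) + 1)) ≤
          (if N - k ≤ m then 2 / (A * (2 * ((N - k : ℕ) : ℝ) + 1)) else 0)
            + a k / (B k * (A + 1)) := by
      intro k hk
      rw [Finset.mem_Icc] at hk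
      obtain ⟨hk1, hk2⟩ := hk
      have hkN : k ≤ N := le_trans hk2 (Nat.sub_le N 1)
      have hcast : ((N - k : ℕ) : ℝ) = (N : ℝ) - k := by
        rw [Nat.cast_sub hkN]
      have hk1N : (k : ℝ) + 1 ≤ N := by exact_mod_cast Nat.succ_le_of_lt (by omega)
      have hwge : (1:ℝ) ≤ (N : ℝ) - k := by linarith
      have hwpos : (0:ℝ) < 2 * ((N : ℝ) - k) + 1 := by linarith
      have hBk := hBpos k
      by_cases hcase : N - k ≤ m
      · rw [if_pos hcase]
        have h2 : (0:ℝ) ≤ a k / (B k * (A + 1)) :=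
          div_nonneg (ha0 k) (mul_nonneg hBk.le (by linarith))
        have hlow : G ^ 2 * (A / 2) ≤ B k := by
          have hsub : N - 1 - k ≤ m - 1 := by omega
          have hsubc : ((N - 1 - k : ℕ) : ℝ) ≤ (m : ℝ) - 1 := by
            have := (Nat.cast_le (α := ℝ)).2 hsub
            rw [Nat.cast_sub hm1] at this
            exact_mod_cast this
          have hc : ((N - 1 - k : ℕ) : ℝ) ≤ A / 2 - 1 := by linarith
          have := hBlow k hk1 hk2
          nlinarith [mul_le_mul_of_nonneg_right hc hG2.le]
        have key : a k * A ≤ 2 * B k := by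
          have hak : a k ≤ G ^ 2 := haG k hk1 hkN
          nlinarith [mul_le_mul_of_nonneg_right hak hApos.le]
        rw [hcast]
        have hApos' : (0:ℝ) < A * (2 * ((N:ℝ) - k) + 1) := by positivity
        refine le_trans ?_ (le_add_of_nonneg_right h2)
        rw [div_le_div_iff₀ (mul_pos hBk hwpos) hApos']
        nlinarith [mul_nonneg (by linarith : (0:ℝ) ≤ 2 * B k - a k * A) hwpos.le]
        -- goal : a k * (A * w) ≤ 2 * (B k * w)
      · rw [if_neg hcase, zero_add]
        have hge : m + 1 ≤ N - k := by omega
        have hgec : (m : ℝ) + 1 ≤ (N : ℝ) - k := by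
          have := (Nat.cast_le (α := ℝ)).2 hge
          push_cast at this
          rw [hcast] at this
          exact_mod_cast this
        have hwA : A + 1 ≤ 2 * ((N : ℝ) - k) + 1 := by linarith
        have hA1pos : (0:ℝ) < A + 1 := by linarith
        rw [div_le_div_iff₀ (mul_pos hBk hwpos) (mul_pos hBk hA1pos)]
        nlinarith [mul_nonneg (mul_nonneg (ha0 k) hBk.le) (by linarith : (0:ℝ) ≤ 2 * ((N:ℝ) - k) + 1 - (A + 1))]
    have hsum := Finset.sum_le_sum hterm
    rw [Finset.sum_add_distrib] at hsum
    -- part 2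
    have hpart2 : ∑ k ∈ Icc 1 (N - 1), a k / (B k * (A + 1)) ≤ Real.log A / (A - 1) := by
      have he : ∀ k, a k / (B k * (A + 1)) = (a k / B k) * (1 / (A + 1)) := by
        intro k
        field_simp
      calc ∑ k ∈ Icc 1 (N - 1), a k / (B k * (A + 1))
          = (∑ k ∈ Icc 1 (N - 1), a k / B k) * (1 / (A + 1)) := by
            rw [Finset.sum_mul]
            exact Finset.sum_congr rfl fun k _ => he k
        _ ≤ Real.log A * (1 / (A + 1)) := by
            apply mul_le_mul_of_nonneg_right telescope
            positivity
        _ ≤ Real.log A / (A - 1) := by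
            rw [mul_one_div]
            apply div_le_div_of_nonneg_left hlogA (by linarith) (by linarith)
    -- part 1
    have hpart1 : ∑ k ∈ Icc 1 (N - 1), (if N - k ≤ m then 2 / (A * (2 * ((N - k : ℕ) : ℝ) + 1)) else 0)
        ≤ (Real.log A + 1 / 2) / (A - 1) := by
      have hreindex : ∑ k ∈ Icc 1 (N - 1), (if N - k ≤ m then 2 / (A * (2 * ((N - k : ℕ) : ℝ) + 1)) else 0)
          = ∑ j ∈ Icc 1 (N - 1), (if j ≤ m then 2 / (A * (2 * (j : ℝ) + 1)) else 0) := by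
        apply Finset.sum_nbij' (fun k => N - k) (fun j => N - j)
        · intro k hk; rw [Finset.mem_Icc] at *; omega
        · intro j hj; rw [Finset.mem_Icc] at *; omega
        · intro k hk; rw [Finset.mem_Icc] at hk; omega
        · intro j hj; rw [Finset.mem_Icc] at hj; omega
        · intro k hk; rfl
      rw [hreindex]
      have hfilter : ∑ j ∈ Icc 1 (N - 1), (if j ≤ m then 2 / (A * (2 * (j : ℝ) + 1)) else 0)
          = ∑ j ∈ (Icc 1 (N - 1)).filter (· ≤ m), 2 / (A * (2 * (j : ℝ) + 1)) :=
        (Finset.sum_filter _ _).symm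
      rw [hfilter]
      have hsubset : (Icc 1 (N - 1)).filter (· ≤ m) ⊆ Icc 1 m := by
        intro j hj
        rw [Finset.mem_filter, Finset.mem_Icc] at hj
        rw [Finset.mem_Icc]
        exact ⟨hj.1.1, hj.2⟩
      have hstep1 : ∑ j ∈ (Icc 1 (N - 1)).filter (· ≤ m), 2 / (A * (2 * (j : ℝ) + 1))
          ≤ ∑ j ∈ Icc 1 m, 2 / (A * (2 * (j : ℝ) + 1)) := by
        apply Finset.sum_le_sum_of_subset_of_nonneg hsubset
        intro j _ _
        positivity
      have hstep2 : ∑ j ∈ Icc 1 m, 2 / (A * (2 * (j : ℝ) + 1))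
          = (∑ j ∈ Icc 1 m, 2 / (2 * (j : ℝ) + 1)) / A := by
        rw [Finset.sum_div]
        apply Finset.sum_congr rfl
        intro j _
        rw [div_div, mul_comm]
      have hstep3 : (∑ j ∈ Icc 1 m, 2 / (2 * (j : ℝ) + 1)) / A ≤ Real.log (2 * m + 1) / A := by
        gcongr
        exact harmonic_log m
      have hlog1 : Real.log (2 * (m : ℝ) + 1) ≤ Real.log A + 1 / 2 := by
        have h21 : 2 * (m : ℝ) + 1 ≤ A + 1 := by linarith
        have hl1 : Real.log (2 * (m : ℝ) + 1) ≤ Real.log (A + 1) :=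
          Real.log_le_log (by positivity) h21
        have h32 : A + 1 ≤ 3 / 2 * A := by linarith
        have hl2 : Real.log (A + 1) ≤ Real.log (3 / 2 * A) :=
          Real.log_le_log (by linarith) h32
        rw [Real.log_mul (by norm_num) (ne_of_gt hApos)] at hl2
        linarith [log_three_halves]
      have hstep4 : Real.log (2 * (m : ℝ) + 1) / A ≤ (Real.log A + 1 / 2) / (A - 1) := by
        have hnum : 0 ≤ Real.log (2 * (m : ℝ) + 1) := Real.log_nonneg (by push_cast; linarith)
        calc Real.log (2 * (m : ℝ) + 1) / A ≤ Real.log (2 * (m : ℝ) + 1) / (A - 1) := by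
              apply div_le_div_of_nonneg_left hnum (by linarith) (by linarith)
          _ ≤ (Real.log A + 1 / 2) / (A - 1) := by
              exact div_le_div_of_nonneg_right (by linarith) (by linarith)
        
      calc ∑ j ∈ (Icc 1 (N - 1)).filter (· ≤ m), 2 / (A * (2 * (j : ℝ) + 1))
          ≤ (∑ j ∈ Icc 1 m, 2 / (2 * (j : ℝ) + 1)) / A := by rw [← hstep2]; exact hstep1
        _ ≤ Real.log (2 * m + 1) / A := hstep3
        _ ≤ (Real.log A + 1 / 2) / (A - 1) := hstep4
    -- combine
    have hcomb : (Real.log A + 1 / 2) / (A - 1) + Real.log A / (A - 1)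
        ≤ (4 * Real.log A + 5) / (2 * (A - 1)) := by
      rw [← add_div]
      have heq : (4 * Real.log A + 5) / (2 * (A - 1)) = (2 * Real.log A + 5 / 2) / (A - 1) := by
        rw [div_eq_div_iff (by linarith) (by linarith)]
        ring
      rw [heq]
      exact div_le_div_of_nonneg_right (by linarith) (by linarith)
    calc ∑ k ∈ Icc 1 (N - 1), a k / (B k * (2 * ((N:ℝ) - k) + 1))
        ≤ (∑ k ∈ Icc 1 (N - 1), (if N - k ≤ m then 2 / (A * (2 * ((N - k : ℕ) : ℝ) + 1)) else 0))
            + ∑ k ∈ Icc 1 (N - 1), a k / (B k * (A + 1)) := hsum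
      _ ≤ (Real.log A + 1 / 2) / (A - 1) + Real.log A / (A - 1) := add_le_add hpart1 hpart2
      _ ≤ (4 * Real.log A + 5) / (2 * (A - 1)) := hcomb
set_option maxHeartbeats 1000000 in
/-- Inequality (neq2): with AdaGrad stepsizes `h_k = h/√(G² + ∑_{i=1}^{k}‖g^i‖²)`,
`h = R/N^γ`, convention `h_{N+1} := h_N`, the backward-recursive weights `v_k`,
and `δ` defined by `G²·N^{2δ} = G² + ∑_{i=1}^{N−1}‖g^i‖²`, one has
`(1/(2h_{N+1})) ∑_{k=1}^{N−1} h_k² v_k² ‖g^k‖² ≤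
  (RG/4)·N^{−γ}·√(N^{2δ}+1)·(4·log(N^{2δ}) + 5)/max{N^{2δ}−1, 1}`. -/
theorem adagrad_weighted_gradient_sum_bound
    (d : ℕ) (G R γ δ : ℝ) (N : ℕ)
    (hG : 0 < G) (hR : 0 < R) (hγ : 0 < γ) (hN : 2 ≤ N)
    (g : ℕ → EuclideanSpace ℝ (Fin d))
    (hgbound : ∀ i, 1 ≤ i → i ≤ N + 1 → ‖g i‖ ≤ G)
    (h : ℕ → ℝ)
    (hdef : ∀ k, 1 ≤ k → k ≤ N →
      h k = R / (N : ℝ) ^ γ / Real.sqrt (G ^ 2 + ∑ i ∈ Icc 1 k, ‖g i‖ ^ 2))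
    (hlast : h (N + 1) = h N)
    (v : ℕ → ℝ)
    (hvN1 : v (N + 1) = 1)
    (hvrec : ∀ k, k ≤ N → v k = h (N + 1) / ∑ i ∈ Icc (k + 1) (N + 1), h i * v i)
    (hδ0 : 0 ≤ δ) (hδhalf : δ ≤ 1 / 2)
    (hδ : G ^ 2 * (N : ℝ) ^ (2 * δ) = G ^ 2 + ∑ i ∈ Icc 1 (N - 1), ‖g i‖ ^ 2) :
    1 / (2 * h (N + 1)) * ∑ k ∈ Icc 1 (N - 1), (h k) ^ 2 * (v k) ^ 2 * ‖g k‖ ^ 2 ≤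
      R * G / 4 * (N : ℝ) ^ (-γ) * Real.sqrt ((N : ℝ) ^ (2 * δ) + 1) *
        (4 * Real.log ((N : ℝ) ^ (2 * δ)) + 5) / max ((N : ℝ) ^ (2 * δ) - 1) 1 := by
  have hN0 : (0:ℝ) < N := by exact_mod_cast (by omega : 0 < N)
  set A : ℝ := (N : ℝ) ^ (2 * δ) with hAdef
  set hb : ℝ := R / (N : ℝ) ^ γ with hhb
  have hNpow : (0:ℝ) < (N:ℝ) ^ γ := Real.rpow_pos_of_pos hN0 γ
  have hhbpos : 0 < hb := div_pos hR hNpow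
  have hBpos : ∀ k, (0:ℝ) < G ^ 2 + ∑ i ∈ Icc 1 k, ‖g i‖ ^ 2 := fun k =>
    add_pos_of_pos_of_nonneg (by positivity) (Finset.sum_nonneg fun i _ => by positivity)
  have hBmono : ∀ j k : ℕ, j ≤ k →
      (G ^ 2 + ∑ i ∈ Icc 1 j, ‖g i‖ ^ 2) ≤ (G ^ 2 + ∑ i ∈ Icc 1 k, ‖g i‖ ^ 2) := by
    intro j k hjk
    have := Finset.sum_le_sum_of_subset_of_nonneg (Finset.Icc_subset_Icc_right hjk)
      (fun i (_ : i ∈ Icc 1 k) _ => by positivity : ∀ i ∈ Icc 1 k, i ∉ Icc 1 j → 0 ≤ ‖g i‖ ^ 2)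
    linarith
  have hpos : ∀ k, 1 ≤ k → k ≤ N → 0 < h k := by
    intro k h1 h2
    rw [hdef k h1 h2]
    exact div_pos hhbpos (Real.sqrt_pos.mpr (hBpos k))
  have hposN1 : 0 < h (N + 1) := by rw [hlast]; exact hpos N (by omega) le_rfl
  have hposall : ∀ k, 1 ≤ k → k ≤ N + 1 → 0 < h k := by
    intro k h1 h2
    rcases Nat.lt_or_ge k (N + 1) with hk | hk
    · exact hpos k h1 (by omega)
    · have : k = N + 1 := by omega
      rw [this]; exact hposN1
  have hlow : ∀ k, 1 ≤ k → k ≤ N → h (N + 1) ≤ h k := by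
    intro k h1 h2
    rw [hlast, hdef k h1 h2, hdef N (by omega) le_rfl]
    exact div_le_div_of_nonneg_left hhbpos.le (Real.sqrt_pos.mpr (hBpos k))
      (Real.sqrt_le_sqrt (hBmono k N h2))
  set S : ℕ → ℝ := fun k => ∑ i ∈ Icc (k + 1) (N + 1), h i * v i with hS
  have hv' : ∀ k, k ≤ N → v k = h (N + 1) / S k := fun k hk => hvrec k hk
  -- positivity of v
  have vpos0 : ∀ n k, N + 1 ≤ k + n → k ≤ N + 1 → 0 < v k := by
    intro n
    induction n with
    | zero =>
      intro k h1 h2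
      have : k = N + 1 := by omega
      rw [this, hvN1]; norm_num
    | succ n ih =>
      intro k h1 h2
      rcases Nat.lt_or_ge k (N + 1) with hk | hk
      · have hkN : k ≤ N := by omega
        rw [hv' k hkN]
        apply div_pos hposN1
        apply Finset.sum_pos
        · intro i hi
          rw [Finset.mem_Icc] at hi
          exact mul_pos (hposall i (by omega) hi.2) (ih i (by omega) hi.2)
        · exact ⟨N + 1, Finset.mem_Icc.mpr ⟨by omega, le_rfl⟩⟩
      · have : k = N + 1 := by omega
        rw [this, hvN1]; norm_num
  have vpos : ∀ k, k ≤ N + 1 → 0 < v k := fun k hk => vpos0 (N + 1) k (by omega) hk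
  have Spos : ∀ k, k ≤ N → 0 < S k := by
    intro k hk
    apply Finset.sum_pos
    · intro i hi
      rw [Finset.mem_Icc] at hi
      exact mul_pos (hposall i (by omega) hi.2) (vpos i hi.2)
    · exact ⟨N + 1, Finset.mem_Icc.mpr ⟨by omega, le_rfl⟩⟩
  have hSstep : ∀ k, k < N → S k = h (k + 1) * v (k + 1) + S (k + 1) := by
    intro k hk
    show ∑ i ∈ Icc (k + 1) (N + 1), h i * v i = _
    rw [Finset.Icc_eq_cons_Ioc (by omega : k + 1 ≤ N + 1), Finset.sum_cons,
      ← Finset.Icc_add_one_left_eq_Ioc]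
  have hSN : S N = h (N + 1) := by
    show ∑ i ∈ Icc (N + 1) (N + 1), h i * v i = _
    rw [Finset.Icc_self, Finset.sum_singleton, hvN1, mul_one]
  have Ssq : ∀ n : ℕ, n ≤ N → h (N + 1) ^ 2 * (1 + 2 * (n : ℝ)) ≤ S (N - n) ^ 2 := by
    intro n
    induction n with
    | zero =>
      intro _
      rw [Nat.sub_zero, hSN]
      norm_num
    | succ n ih =>
      intro hn
      have hkeq : N - (n + 1) + 1 = N - n := by omega
      have hstep := hSstep (N - (n + 1)) (by omega)
      rw [hkeq] at hstep
      have hk1le : 1 ≤ N - n := by omega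
      have hk1le' : N - n ≤ N := by omega
      have hvv : v (N - n) = h (N + 1) / S (N - n) := hv' (N - n) hk1le'
      have hs : 0 < S (N - n) := Spos (N - n) hk1le'
      have hh1 : h (N + 1) ≤ h (N - n) := hlow (N - n) hk1le hk1le'
      have ihn := ih (by omega)
      rw [hstep, hvv]
      have hmul : S (N - n) * (h (N - n) * (h (N + 1) / S (N - n))) = h (N - n) * h (N + 1) := by
        field_simp
      push_cast
      nlinarith [sq_nonneg (h (N - n) * (h (N + 1) / S (N - n))),
        mul_le_mul_of_nonneg_right hh1 hposN1.le, hmul, ihn, hs, hposN1]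
  -- per-term bound
  have hterm : ∀ k ∈ Icc 1 (N - 1), h k ^ 2 * v k ^ 2 * ‖g k‖ ^ 2 ≤
      hb ^ 2 * (‖g k‖ ^ 2 /
        ((G ^ 2 + ∑ i ∈ Icc 1 k, ‖g i‖ ^ 2) * (2 * ((N : ℝ) - k) + 1))) := by
    intro k hk
    rw [Finset.mem_Icc] at hk
    obtain ⟨hk1, hk2⟩ := hk
    have hkN : k ≤ N := by omega
    have hSk : 0 < S k := Spos k hkN
    have hSsq' : h (N + 1) ^ 2 * (1 + 2 * ((N - k : ℕ) : ℝ)) ≤ S k ^ 2 := by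
      have := Ssq (N - k) (Nat.sub_le N k)
      rwa [show N - (N - k) = k from by omega] at this
    have hcast : ((N - k : ℕ) : ℝ) = (N : ℝ) - k := by
      rw [Nat.cast_sub hkN]
    rw [hcast] at hSsq'
    have hk1N : (k : ℝ) + 1 ≤ N := by exact_mod_cast Nat.succ_le_of_lt (by omega)
    have hwpos : (0:ℝ) < 2 * ((N : ℝ) - k) + 1 := by linarith
    have hBk := hBpos k
    have hhk2 : h k ^ 2 = hb ^ 2 / (G ^ 2 + ∑ i ∈ Icc 1 k, ‖g i‖ ^ 2) := by
      rw [hdef k hk1 hkN, div_pow, Real.sq_sqrt hBk.le]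
    have hv2 : v k ^ 2 = h (N + 1) ^ 2 / S k ^ 2 := by
      rw [hv' k hkN, div_pow]
    have hfrac : h (N + 1) ^ 2 / S k ^ 2 ≤ 1 / (2 * ((N : ℝ) - k) + 1) := by
      rw [div_le_div_iff₀ (pow_pos hSk 2) hwpos]
      nlinarith [hSsq']
    calc h k ^ 2 * v k ^ 2 * ‖g k‖ ^ 2
        = (hb ^ 2 / (G ^ 2 + ∑ i ∈ Icc 1 k, ‖g i‖ ^ 2)) * ‖g k‖ ^ 2
            * (h (N + 1) ^ 2 / S k ^ 2) := by rw [hhk2, hv2]; ring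
      _ ≤ (hb ^ 2 / (G ^ 2 + ∑ i ∈ Icc 1 k, ‖g i‖ ^ 2)) * ‖g k‖ ^ 2
            * (1 / (2 * ((N : ℝ) - k) + 1)) := by
          apply mul_le_mul_of_nonneg_left hfrac
          have : (0:ℝ) ≤ hb ^ 2 / (G ^ 2 + ∑ i ∈ Icc 1 k, ‖g i‖ ^ 2) :=
            div_nonneg (by positivity) hBk.le
          positivity
      _ = hb ^ 2 * (‖g k‖ ^ 2 /
            ((G ^ 2 + ∑ i ∈ Icc 1 k, ‖g i‖ ^ 2) * (2 * ((N : ℝ) - k) + 1))) := by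
          rw [div_mul_eq_mul_div, div_mul_eq_mul_div, mul_one_div, div_div]
          ring
  have hsumT : ∑ k ∈ Icc 1 (N - 1), h k ^ 2 * v k ^ 2 * ‖g k‖ ^ 2 ≤
      hb ^ 2 * ∑ k ∈ Icc 1 (N - 1), ‖g k‖ ^ 2 /
        ((G ^ 2 + ∑ i ∈ Icc 1 k, ‖g i‖ ^ 2) * (2 * ((N : ℝ) - k) + 1)) := by
    rw [Finset.mul_sum]
    exact Finset.sum_le_sum hterm
  -- apply core lemma
  have hcore := core_sum_bound G hG N hN (fun i => ‖g i‖ ^ 2)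
    (fun i => by positivity)
    (fun i h1 h2 => by
      have := hgbound i h1 (by omega)
      show ‖g i‖ ^ 2 ≤ G ^ 2
      nlinarith [norm_nonneg (g i)])
    A hδ
  have hA1 : 1 ≤ A := Real.one_le_rpow (by exact_mod_cast (by omega : 1 ≤ N)) (by linarith)
  have hlogA : 0 ≤ Real.log A := Real.log_nonneg hA1
  set M : ℝ := max (A - 1) 1 with hMdef
  have hM : 0 < M := lt_of_lt_of_le one_pos (le_max_right _ _)
  have hQ0 : 0 ≤ (4 * Real.log A + 5) / (2 * M) := div_nonneg (by linarith) (by linarith)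
  -- bound on 1/h(N+1)
  have hinv : 1 / h (N + 1) ≤ G * Real.sqrt (A + 1) / hb := by
    have hNm1 : N - 1 + 1 = N := by omega
    have hsplitN : ∑ i ∈ Icc 1 N, ‖g i‖ ^ 2
        = (∑ i ∈ Icc 1 (N - 1), ‖g i‖ ^ 2) + ‖g N‖ ^ 2 := by
      conv_lhs => rw [← hNm1]
      rw [Finset.sum_Icc_succ_top (by omega : 1 ≤ N - 1 + 1), hNm1]
    have hgN : ‖g N‖ ^ 2 ≤ G ^ 2 := by
      have := hgbound N (by omega) (by omega)
      nlinarith [norm_nonneg (g N)]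
    have hBN : G ^ 2 + ∑ i ∈ Icc 1 N, ‖g i‖ ^ 2 ≤ G ^ 2 * (A + 1) := by
      rw [hsplitN]
      nlinarith [hδ]
    have hsq : Real.sqrt (G ^ 2 + ∑ i ∈ Icc 1 N, ‖g i‖ ^ 2) ≤ G * Real.sqrt (A + 1) := by
      have h1 : Real.sqrt (G ^ 2 + ∑ i ∈ Icc 1 N, ‖g i‖ ^ 2)
          ≤ Real.sqrt (G ^ 2 * (A + 1)) := Real.sqrt_le_sqrt hBN
      rw [Real.sqrt_mul (by positivity) (A + 1), Real.sqrt_sq hG.le] at h1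
      exact h1
    rw [hlast, hdef N (by omega) le_rfl, one_div_div]
    exact div_le_div_of_nonneg_right hsq hhbpos.le
  -- final assembly
  set T : ℝ := ∑ k ∈ Icc 1 (N - 1), h k ^ 2 * v k ^ 2 * ‖g k‖ ^ 2 with hT
  have hcoef : (0:ℝ) ≤ 1 / (2 * h (N + 1)) := by
    apply div_nonneg zero_le_one
    linarith
  have hCS0 : 0 ≤ ∑ k ∈ Icc 1 (N - 1), ‖g k‖ ^ 2 /
      ((G ^ 2 + ∑ i ∈ Icc 1 k, ‖g i‖ ^ 2) * (2 * ((N : ℝ) - k) + 1)) := by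
    apply Finset.sum_nonneg
    intro k hk
    rw [Finset.mem_Icc] at hk
    have hk1N : (k : ℝ) + 1 ≤ N := by exact_mod_cast Nat.succ_le_of_lt (by omega)
    have : (0:ℝ) < 2 * ((N : ℝ) - k) + 1 := by linarith
    exact div_nonneg (by positivity) (mul_nonneg (hBpos k).le this.le)
  have step12 : 1 / (2 * h (N + 1)) * T
      ≤ 1 / (2 * h (N + 1)) * (hb ^ 2 * ((4 * Real.log A + 5) / (2 * M))) := by
    apply mul_le_mul_of_nonneg_left ?_ hcoef
    calc T ≤ hb ^ 2 * ∑ k ∈ Icc 1 (N - 1), ‖g k‖ ^ 2 /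
          ((G ^ 2 + ∑ i ∈ Icc 1 k, ‖g i‖ ^ 2) * (2 * ((N : ℝ) - k) + 1)) := hsumT
      _ ≤ hb ^ 2 * ((4 * Real.log A + 5) / (2 * M)) := by
          apply mul_le_mul_of_nonneg_left hcore (by positivity)
  have step3 : 1 / (2 * h (N + 1)) * (hb ^ 2 * ((4 * Real.log A + 5) / (2 * M)))
      ≤ (G * Real.sqrt (A + 1) / hb) * (hb ^ 2 * ((4 * Real.log A + 5) / (2 * M))) / 2 := by
    have he : 1 / (2 * h (N + 1)) * (hb ^ 2 * ((4 * Real.log A + 5) / (2 * M)))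
        = (1 / h (N + 1)) * (hb ^ 2 * ((4 * Real.log A + 5) / (2 * M))) / 2 := by
      rw [one_div, mul_inv, one_div]
      ring
    rw [he]
    apply div_le_div_of_nonneg_right ?_ (by norm_num)
    apply mul_le_mul_of_nonneg_right hinv
    positivity
  have step4 : (G * Real.sqrt (A + 1) / hb) * (hb ^ 2 * ((4 * Real.log A + 5) / (2 * M))) / 2
      = R * G / 4 * (N : ℝ) ^ (-γ) * Real.sqrt (A + 1) * (4 * Real.log A + 5) / M := by
    rw [Real.rpow_neg hN0.le, hhb]
    field_simp
    ring
  calc 1 / (2 * h (N + 1)) * T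
      ≤ (G * Real.sqrt (A + 1) / hb) * (hb ^ 2 * ((4 * Real.log A + 5) / (2 * M))) / 2 :=
        le_trans step12 step3
    _ = R * G / 4 * (N : ℝ) ^ (-γ) * Real.sqrt (A + 1) * (4 * Real.log A + 5) / M := step4
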